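/- Let p, q, r be real numbers with p + 1 > 0 and r > q + 1 > 0. Then there exists a constant C > 0, depending only on p, q, r, such that for all u ∈ [0,1), ∫₀¹ tᵖ(1−t)^q / (1−ut)^r dt ≤ C·(1−u)^{q+1−r}. -/
import Mathlib


open MeasureTheory

set_option maxHeartbeats 1000000 in
theorem hypergeometric_integral_bound (p q r : ℝ) (hp : 0 < p + 1) (hq : 0 < q + 1)
    (hr : q + 1 < r) :
    ∃ C : ℝ, 0 < C ∧ ∀ u : ℝ, 0 ≤ u → u < 1 →
      (∫ t in Set.Ioo (0 : ℝ) 1, t ^ p * (1 - t) ^ q / (1 - u * t) ^ r)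
        ≤ C * (1 - u) ^ (q + 1 - r) := by
  have hr0 : 0 < r := lt_trans hq hr
  have hd0 : 0 < r - q - 1 := by linarith
  set M₁ : ℝ := (1 + (2:ℝ) ^ (-q)) * 2 ^ r with hM₁def
  set M₂ : ℝ := 1 + (2:ℝ) ^ (-p) with hM₂def
  have hM₁ : 0 < M₁ := by positivity
  have hM₂ : 0 < M₂ := by positivity
  set C : ℝ := M₁ * ((1/2:ℝ) ^ (p+1) / (p+1)) + M₂ * (2:ℝ) ^ (r-q-1) / (r-q-1)
      + M₂ / (q+1) with hCdef
  have hC : 0 < C := by positivity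
  refine ⟨C, hC, ?_⟩
  intro u hu hu1
  have h1u : 0 < 1 - u := by linarith
  have h1u1 : 1 - u ≤ 1 := by linarith
  set m : ℝ := max u (1/2) with hmdef
  have hm0 : (1/2:ℝ) ≤ m := le_max_right _ _
  have hum : u ≤ m := le_max_left _ _
  have hm1 : m < 1 := max_lt hu1 (by norm_num)
  have h1m : 0 < 1 - m := by linarith
  set f : ℝ → ℝ := fun t => t ^ p * (1 - t) ^ q / (1 - u * t) ^ r with hfdef
  -- basic denominator facts
  have hden : ∀ t : ℝ, 0 ≤ t → 1 - t ≤ 1 - u * t := by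
    intro t ht; nlinarith
  have hden2 : ∀ t : ℝ, t ≤ 1 → 1 - u ≤ 1 - u * t := by
    intro t ht; nlinarith
  -- key bound: x^s ≤ 1 + 2^(-s) for x ∈ [1/2, 1]
  have key : ∀ (s x : ℝ), 1/2 ≤ x → x ≤ 1 → x ^ s ≤ 1 + (2:ℝ) ^ (-s) := by
    intro s x hx hx1
    have h2 : (0:ℝ) < (2:ℝ) ^ (-s) := Real.rpow_pos_of_pos two_pos _
    rcases le_or_gt 0 s with hs | hs
    · have : x ^ s ≤ 1 := Real.rpow_le_one (by linarith) hx1 hs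
      linarith
    · have h1 : x ^ s ≤ (1/2:ℝ) ^ s := Real.rpow_le_rpow_of_nonpos (by norm_num) hx hs.le
      have h12 : (1/2:ℝ) ^ s = (2:ℝ) ^ (-s) := by
        rw [Real.rpow_neg (by norm_num), ← Real.inv_rpow (by norm_num)]
        norm_num
      linarith
  have hhalf : ((1/2:ℝ)) ^ r = ((2:ℝ) ^ r)⁻¹ := by
    rw [show ((1/2:ℝ)) = (2:ℝ)⁻¹ by norm_num, Real.inv_rpow (by norm_num)]
  -- pointwise bound on [0, 1/2]
  have hfg1 : ∀ t ∈ Set.Icc (0:ℝ) (1/2), f t ≤ M₁ * t ^ p := by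
    intro t ht
    obtain ⟨ht0, ht2⟩ := ht
    have h1t : (1/2:ℝ) ≤ 1 - t := by linarith
    have hdt : (1/2:ℝ) ≤ 1 - u * t := le_trans h1t (hden t ht0)
    have hnum : (1 - t) ^ q ≤ 1 + (2:ℝ) ^ (-q) := key q (1 - t) h1t (by linarith)
    have htp : (0:ℝ) ≤ t ^ p := Real.rpow_nonneg ht0 _
    have hN : t ^ p * (1 - t) ^ q ≤ (1 + (2:ℝ) ^ (-q)) * t ^ p := by
      calc t ^ p * (1 - t) ^ q ≤ t ^ p * (1 + (2:ℝ) ^ (-q)) :=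
            mul_le_mul_of_nonneg_left hnum htp
        _ = (1 + (2:ℝ) ^ (-q)) * t ^ p := by ring
    have hDpos : (0:ℝ) < (1/2:ℝ) ^ r := Real.rpow_pos_of_pos (by norm_num) _
    have hD : (1/2:ℝ) ^ r ≤ (1 - u * t) ^ r :=
      Real.rpow_le_rpow (by norm_num) hdt hr0.le
    calc f t ≤ ((1 + (2:ℝ) ^ (-q)) * t ^ p) / ((1/2:ℝ) ^ r) :=
          div_le_div₀ (by positivity) hN hDpos hD
      _ = M₁ * t ^ p := by rw [hhalf]; field_simp [hM₁def]; ring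
  -- t^p ≤ M₂ on [1/2, 1]
  have htpM : ∀ t : ℝ, 1/2 ≤ t → t ≤ 1 → t ^ p ≤ M₂ := fun t h1 h2 => key p t h1 h2
  -- pointwise bound on [1/2, m]
  have hfg2 : ∀ t ∈ Set.Icc (1/2:ℝ) m, f t ≤ M₂ * (1 - t) ^ (q - r) := by
    intro t ht
    obtain ⟨ht0, htm⟩ := ht
    have ht1 : t ≤ 1 := le_trans htm hm1.le
    have h1t : 0 < 1 - t := by linarith [htm, hm1]
    have hq0 : (0:ℝ) ≤ (1 - t) ^ q := Real.rpow_nonneg h1t.le _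
    have hN : t ^ p * (1 - t) ^ q ≤ M₂ * (1 - t) ^ q :=
      mul_le_mul_of_nonneg_right (htpM t ht0 ht1) hq0
    have hDpos : (0:ℝ) < (1 - t) ^ r := Real.rpow_pos_of_pos h1t _
    have hD : (1 - t) ^ r ≤ (1 - u * t) ^ r :=
      Real.rpow_le_rpow h1t.le (hden t (by linarith)) hr0.le
    calc f t ≤ (M₂ * (1 - t) ^ q) / ((1 - t) ^ r) := div_le_div₀ (by positivity) hN hDpos hD
      _ = M₂ * (1 - t) ^ (q - r) := by
          rw [Real.rpow_sub h1t]; ring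
  -- pointwise bound on [m, 1]
  have hfg3 : ∀ t ∈ Set.Icc m (1:ℝ), f t ≤ M₂ * (1 - u) ^ (-r) * (1 - t) ^ q := by
    intro t ht
    obtain ⟨htm, ht1⟩ := ht
    have ht0 : (1/2:ℝ) ≤ t := le_trans hm0 htm
    have h1t : 0 ≤ 1 - t := by linarith
    have hq0 : (0:ℝ) ≤ (1 - t) ^ q := Real.rpow_nonneg h1t _
    have hN : t ^ p * (1 - t) ^ q ≤ M₂ * (1 - t) ^ q :=
      mul_le_mul_of_nonneg_right (htpM t ht0 ht1) hq0
    have hDpos : (0:ℝ) < (1 - u) ^ r := Real.rpow_pos_of_pos h1u _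
    have hD : (1 - u) ^ r ≤ (1 - u * t) ^ r :=
      Real.rpow_le_rpow h1u.le (hden2 t ht1) hr0.le
    calc f t ≤ (M₂ * (1 - t) ^ q) / ((1 - u) ^ r) := div_le_div₀ (by positivity) hN hDpos hD
      _ = M₂ * (1 - u) ^ (-r) * (1 - t) ^ q := by
          rw [Real.rpow_neg h1u.le]; ring
  -- nonnegativity of f
  have hf0 : ∀ t : ℝ, 0 ≤ t → t ≤ 1 → 0 ≤ f t := by
    intro t ht0 ht1
    have h2 : 0 < 1 - u * t := lt_of_lt_of_le h1u (hden2 t ht1)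
    have h3 : (0:ℝ) ≤ 1 - t := by linarith
    exact div_nonneg (mul_nonneg (Real.rpow_nonneg ht0 _) (Real.rpow_nonneg h3 _))
      (Real.rpow_nonneg h2.le _)
  have hmeas : Measurable f := by fun_prop
  -- integrability pieces
  have Ig1 : IntervalIntegrable (fun t : ℝ => M₁ * t ^ p) volume 0 (1/2) :=
    (intervalIntegral.intervalIntegrable_rpow' (by linarith)).const_mul M₁
  have I1 : IntervalIntegrable f volume 0 (1/2) := by
    apply Ig1.mono_fun' (hmeas.aestronglyMeasurable.restrict)
    rw [Set.uIoc_of_le (by norm_num : (0:ℝ) ≤ 1/2)]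
    refine (ae_restrict_iff' measurableSet_Ioc).2 (Filter.Eventually.of_forall ?_)
    intro t ht
    have h1 := hf0 t ht.1.le (by linarith [ht.2])
    show ‖f t‖ ≤ M₁ * t ^ p
    rw [Real.norm_eq_abs, abs_of_nonneg h1]
    exact hfg1 t ⟨ht.1.le, ht.2⟩
  have I2 : IntervalIntegrable f volume (1/2) m := by
    apply ContinuousOn.intervalIntegrable
    rw [Set.uIcc_of_le hm0]
    have : ∀ t ∈ Set.Icc (1/2:ℝ) m, (1 - u * t) ^ r ≠ 0 := by
      intro t ht
      have h1t : 0 < 1 - t := by linarith [ht.2, hm1]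
      have : 0 < 1 - u * t := lt_of_lt_of_le h1t (hden t (by linarith [ht.1]))
      positivity
    apply ContinuousOn.div _ _ this
    · apply ContinuousOn.mul
      · exact continuousOn_id.rpow_const (fun t ht => Or.inl (by
          have : (0:ℝ) < t := lt_of_lt_of_le (by norm_num) ht.1
          exact ne_of_gt this))
      · exact (continuousOn_const.sub continuousOn_id).rpow_const (fun t ht => Or.inl (by
          have : (0:ℝ) < 1 - t := by linarith [ht.2, hm1]
          exact ne_of_gt this))
    · exact (continuousOn_const.sub (continuousOn_const.mul continuousOn_id)).rpow_const
        (fun t ht => Or.inl (by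
          have h1t : (0:ℝ) < 1 - t := by linarith [ht.2, hm1]
          have : 0 < 1 - u * t := lt_of_lt_of_le h1t (hden t (by linarith [ht.1]))
          exact ne_of_gt this))
  have Ig3 : IntervalIntegrable (fun t : ℝ => M₂ * (1 - u) ^ (-r) * (1 - t) ^ q)
      volume m 1 := by
    have h0 : IntervalIntegrable (fun x : ℝ => x ^ q) volume 0 (1 - m) :=
      intervalIntegral.intervalIntegrable_rpow' (by linarith)
    have h1 := (h0.comp_sub_left 1).symm
    simp only [sub_zero, sub_sub_cancel] at h1
    exact h1.const_mul _
  have I3 : IntervalIntegrable f volume m 1 := by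
    apply Ig3.mono_fun' (hmeas.aestronglyMeasurable.restrict)
    rw [Set.uIoc_of_le hm1.le]
    refine (ae_restrict_iff' measurableSet_Ioc).2 (Filter.Eventually.of_forall ?_)
    intro t ht
    have h1 := hf0 t (by linarith [ht.1, hm0]) ht.2
    show ‖f t‖ ≤ M₂ * (1 - u) ^ (-r) * (1 - t) ^ q
    rw [Real.norm_eq_abs, abs_of_nonneg h1]
    exact hfg3 t ⟨ht.1.le, ht.2⟩
  -- split the integral
  have hsplit : (∫ t in Set.Ioo (0:ℝ) 1, f t)
      = (∫ t in (0:ℝ)..(1/2), f t) + (∫ t in (1/2:ℝ)..m, f t) + (∫ t in m..(1:ℝ), f t) := by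
    rw [intervalIntegral.integral_add_adjacent_intervals I1 I2,
      intervalIntegral.integral_add_adjacent_intervals (I1.trans I2) I3,
      intervalIntegral.integral_of_le (by norm_num : (0:ℝ) ≤ 1),
      integral_Ioc_eq_integral_Ioo]
  -- bound each piece
  have hE1 : (∫ t in (0:ℝ)..(1/2), f t) ≤ M₁ * ((1/2:ℝ) ^ (p+1) / (p+1)) := by
    have h := intervalIntegral.integral_mono_on (by norm_num : (0:ℝ) ≤ 1/2) I1 Ig1 hfg1
    rw [intervalIntegral.integral_const_mul, integral_rpow (Or.inl (by linarith : (-1:ℝ) < p)),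
      Real.zero_rpow (by linarith : p + 1 ≠ 0)] at h
    calc (∫ t in (0:ℝ)..(1/2), f t) ≤ M₁ * (((1/2:ℝ) ^ (p+1) - 0) / (p+1)) := h
      _ = M₁ * ((1/2:ℝ) ^ (p+1) / (p+1)) := by ring_nf
  have hE2 : (∫ t in (1/2:ℝ)..m, f t)
      ≤ M₂ * (((1-m) ^ (q-r+1) - (1/2:ℝ) ^ (q-r+1)) / (r-q-1)) := by
    have Ig2 : IntervalIntegrable (fun t : ℝ => M₂ * (1 - t) ^ (q - r)) volume (1/2) m := by
      apply ContinuousOn.intervalIntegrable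
      rw [Set.uIcc_of_le hm0]
      exact (continuousOn_const.mul ((continuousOn_const.sub continuousOn_id).rpow_const
        (fun t ht => Or.inl (by
          have : (0:ℝ) < 1 - t := by linarith [ht.2, hm1]
          exact ne_of_gt this))))
    have h := intervalIntegral.integral_mono_on hm0 I2 Ig2 hfg2
    rw [intervalIntegral.integral_const_mul] at h
    have hcomp : (∫ t in (1/2:ℝ)..m, (1 - t) ^ (q - r))
        = ∫ x in (1-m)..(1-(1/2:ℝ)), x ^ (q - r) :=
      intervalIntegral.integral_comp_sub_left (fun x => x ^ (q - r)) 1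
    have heval : (∫ x in (1-m)..(1-(1/2:ℝ)), x ^ (q - r))
        = ((1-(1/2:ℝ)) ^ (q-r+1) - (1-m) ^ (q-r+1)) / (q-r+1) := by
      apply integral_rpow
      refine Or.inr ⟨by linarith, ?_⟩
      rw [Set.uIcc_of_le (by linarith : 1 - m ≤ 1 - (1/2:ℝ))]
      intro hmem
      exact absurd hmem.1 (by linarith)
    rw [hcomp, heval] at h
    calc (∫ t in (1/2:ℝ)..m, f t)
        ≤ M₂ * (((1-(1/2:ℝ)) ^ (q-r+1) - (1-m) ^ (q-r+1)) / (q-r+1)) := h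
      _ = M₂ * (((1-m) ^ (q-r+1) - (1/2:ℝ) ^ (q-r+1)) / (r-q-1)) := by
          rw [show (1-(1/2:ℝ)) = (1/2:ℝ) by norm_num,
            show q - r + 1 = -(r-q-1) by ring, div_neg, ← neg_div, neg_sub]
  have hE3 : (∫ t in m..(1:ℝ), f t) ≤ M₂ * (1-u) ^ (-r) * ((1-m) ^ (q+1) / (q+1)) := by
    have h := intervalIntegral.integral_mono_on hm1.le I3 Ig3 hfg3
    rw [intervalIntegral.integral_const_mul] at h
    have hcomp : (∫ t in m..(1:ℝ), (1 - t) ^ q) = ∫ x in (1-(1:ℝ))..(1-m), x ^ q :=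
      intervalIntegral.integral_comp_sub_left (fun x => x ^ q) 1
    have heval : (∫ x in (1-(1:ℝ))..(1-m), x ^ q) = (1-m) ^ (q+1) / (q+1) := by
      rw [show (1-(1:ℝ)) = 0 by norm_num,
        integral_rpow (Or.inl (by linarith : (-1:ℝ) < q)),
        Real.zero_rpow (by linarith : q + 1 ≠ 0)]
      ring
    rw [hcomp, heval] at h
    exact h
  -- combine
  have hEpos : (0:ℝ) < (1-u) ^ (q+1-r) := Real.rpow_pos_of_pos h1u _
  have hE1' : (1:ℝ) ≤ (1-u) ^ (q+1-r) :=
    Real.one_le_rpow_of_pos_of_le_one_of_nonpos h1u h1u1 (by linarith)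
  -- term 2 final bound
  have hkey2 : (1-m) ^ (q-r+1) ≤ (2:ℝ) ^ (r-q-1) * (1-u) ^ (q+1-r) := by
    have h2one : (1:ℝ) ≤ (2:ℝ) ^ (r-q-1) := Real.one_le_rpow (by norm_num) hd0.le
    rcases max_choice u (1/2) with hc | hc
    · rw [show q - r + 1 = q + 1 - r by ring, hmdef, hc]
      nlinarith [hEpos]
    · rw [hmdef, hc, show (1:ℝ) - 1/2 = 1/2 by norm_num,
        show q - r + 1 = -(r-q-1) by ring, Real.rpow_neg (by norm_num : (0:ℝ) ≤ 1/2),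
        ← Real.inv_rpow (by norm_num : (0:ℝ) ≤ (1/2:ℝ))]
      norm_num
      nlinarith [Real.rpow_pos_of_pos (show (0:ℝ) < 2 by norm_num) (r-q-1)]
  have hT2 : M₂ * (((1-m) ^ (q-r+1) - (1/2:ℝ) ^ (q-r+1)) / (r-q-1))
      ≤ M₂ * (2:ℝ) ^ (r-q-1) / (r-q-1) * (1-u) ^ (q+1-r) := by
    have hhalfpos : (0:ℝ) ≤ (1/2:ℝ) ^ (q-r+1) := Real.rpow_nonneg (by norm_num) _
    rw [show M₂ * (2:ℝ) ^ (r-q-1) / (r-q-1) * (1-u) ^ (q+1-r)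
        = M₂ * (((2:ℝ) ^ (r-q-1) * (1-u) ^ (q+1-r)) / (r-q-1)) by ring]
    gcongr
    linarith [hkey2]
  have hT3 : M₂ * (1-u) ^ (-r) * ((1-m) ^ (q+1) / (q+1))
      ≤ M₂ / (q+1) * (1-u) ^ (q+1-r) := by
    have h1 : (1-m) ^ (q+1) ≤ (1-u) ^ (q+1) :=
      Real.rpow_le_rpow h1m.le (by linarith) hq.le
    have h2 : (1-u) ^ (-r) * (1-u) ^ (q+1) = (1-u) ^ (q+1-r) := by
      rw [← Real.rpow_add h1u]; ring_nf
    have h3 : (0:ℝ) < (1-u) ^ (-r) := Real.rpow_pos_of_pos h1u _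
    calc M₂ * (1-u) ^ (-r) * ((1-m) ^ (q+1) / (q+1))
        ≤ M₂ * (1-u) ^ (-r) * ((1-u) ^ (q+1) / (q+1)) := by
          gcongr
      _ = M₂ / (q+1) * (1-u) ^ (q+1-r) := by
          rw [← h2]; ring
  have hT1 : M₁ * ((1/2:ℝ) ^ (p+1) / (p+1))
      ≤ M₁ * ((1/2:ℝ) ^ (p+1) / (p+1)) * (1-u) ^ (q+1-r) :=
    le_mul_of_one_le_right (by positivity) hE1'
  calc (∫ t in Set.Ioo (0:ℝ) 1, f t)
      = (∫ t in (0:ℝ)..(1/2), f t) + (∫ t in (1/2:ℝ)..m, f t) + (∫ t in m..(1:ℝ), f t) :=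
        hsplit
    _ ≤ C * (1-u) ^ (q+1-r) := by
        rw [hCdef]
        have := hE1.trans hT1
        linarith [hE2.trans hT2, hE3.trans hT3, this]
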